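/- Let Q be a finite quiver, k an algebraically closed field, α a dimension vector, and φ : ⊕_v O(v)^{a(v)} → ⊕_v O(v)^{b(v)} a morphism in the additive category add(Q) such that Σ_v a(v)α(v) = Σ_v b(v)α(v). Then the function P_{φ,α} : R(Q,α) → k defined by P_{φ,α}(p) = det R_p(φ) is a polynomial function on R(Q,α) that is a semi-invariant for the action of GL(α): there exists a character ψ of GL(α) such that P_{φ,α}(g · p) = ψ(g) P_{φ,α}(p) for all g ∈ GL(α), p ∈ R(Q,α). -/

import Mathlib

open Matrix BigOperators


/-- Paths in the quiver with arrow set `A`, vertex set `V`, and source/target maps `src`, `tgt`. -/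
inductive QPath {V A : Type} (src tgt : A → V) : V → V → Type where
  | nil (v : V) : QPath src tgt v v
  | cons {u w : V} (p : QPath src tgt u w) (a : A) (h : src a = w) : QPath src tgt u (tgt a)

namespace QPath
variable {V A : Type} {src tgt : A → V}

/-- Concatenation of paths. -/
def comp {u v w : V} (p : QPath src tgt u v) : QPath src tgt v w → QPath src tgt u w
  | .nil _ => p
  | .cons q a h => .cons (p.comp q) a h

/-- Length of a path. -/
def length {u v : V} : QPath src tgt u v → ℕ
  | .nil _ => 0
  | .cons p _ _ => p.length + 1

end QPath

/-- The space `R(Q,α)` of representations of dimension vector `α`. -/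
abbrev RepSpace (k : Type) [Field k] {V A : Type} (src tgt : A → V) (α : V → ℕ) : Type :=
  ∀ a : A, Matrix (Fin (α (src a))) (Fin (α (tgt a))) k

variable {k V A : Type} [Field k]

/-- The matrix obtained by evaluating the representation corresponding to `p ∈ R(Q,α)`
on a path. -/
def evalPath {src tgt : A → V} {α : V → ℕ} (p : RepSpace k src tgt α) :
    ∀ {u v : V}, QPath src tgt u v → Matrix (Fin (α u)) (Fin (α v)) k
  | _, _, .nil v => 1
  | _, _, .cons q a h => evalPath p q * (p a).submatrix (Fin.cast (congrArg α h).symm) id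

/-- The base-change action of `GL(α) = ∏ᵥ GL_{α(v)}(k)` on `R(Q,α)`:
`(g·p)(a) = g(src a)⁻¹ ⬝ p(a) ⬝ g(tgt a)`. -/
def glAct {src tgt : A → V} {α : V → ℕ} (g : ∀ v, GL (Fin (α v)) k)
    (p : RepSpace k src tgt α) : RepSpace k src tgt α :=
  fun a => (↑((g (src a))⁻¹) : Matrix (Fin (α (src a))) (Fin (α (src a))) k) * p a *
    (↑(g (tgt a)) : Matrix (Fin (α (tgt a))) (Fin (α (tgt a))) k)

/-- A map `φ : ⊕ᵢ O(vi i) → ⊕ⱼ O(vj j)` in the additive category `add(Q)`: each entry is a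
formal `k`-linear combination of paths from `vi i` to `vj j`. -/
structure AddMap (k : Type) [Field k] {V A : Type} (src tgt : A → V) : Type 1 where
  ι : Type
  κ : Type
  [fι : Fintype ι]
  [fκ : Fintype κ]
  [dι : DecidableEq ι]
  [dκ : DecidableEq κ]
  vi : ι → V
  vj : κ → V
  entry : ∀ i j, QPath src tgt (vi i) (vj j) →₀ k

attribute [instance] AddMap.fι AddMap.fκ AddMap.dι AddMap.dκ

namespace AddMap
variable {src tgt : A → V}

/-- Row index set of the matrix `R_p(φ)`. -/
abbrev rows (φ : AddMap k src tgt) (α : V → ℕ) : Type := Σ i : φ.ι, Fin (α (φ.vi i))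

/-- Column index set of the matrix `R_p(φ)`. -/
abbrev cols (φ : AddMap k src tgt) (α : V → ℕ) : Type := Σ j : φ.κ, Fin (α (φ.vj j))

/-- The block matrix `R_p(φ)` induced by `φ` on the representation corresponding to `p`. -/
def mat (φ : AddMap k src tgt) (α : V → ℕ) (p : RepSpace k src tgt α) :
    Matrix (φ.rows α) (φ.cols α) k :=
  fun r c => ((φ.entry r.1 c.1).sum fun q coef => coef • evalPath p q) r.2 c.2

end AddMap

/-- The determinantal semi-invariant `P_{φ,α}(p) = det R_p(φ)`, where the square shape is
witnessed by the bijection `e` between columns and rows. -/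
def detP {src tgt : A → V} (φ : AddMap k src tgt) (α : V → ℕ)
    (e : φ.cols α ≃ φ.rows α) (p : RepSpace k src tgt α) : k :=
  ((φ.mat α p).submatrix e id).det

/-- A function on `R(Q,α)` is polynomial if it is given by a polynomial in the matrix entries. -/
def IsPolyFun {src tgt : A → V} {α : V → ℕ} (F : RepSpace k src tgt α → k) : Prop :=
  ∃ P : MvPolynomial (Σ a : A, Fin (α (src a)) × Fin (α (tgt a))) k,
    ∀ p, MvPolynomial.eval (fun x => p x.1 x.2.1 x.2.2) P = F p

/-- A function on `R(Q,α)` is a semi-invariant if it transforms under `GL(α)` via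
a character (group homomorphism to `kˣ`). -/
def IsSemiInv {src tgt : A → V} {α : V → ℕ} (F : RepSpace k src tgt α → k) : Prop :=
  ∃ ψ : (∀ v, GL (Fin (α v)) k) →* kˣ, ∀ g p, F (glAct g p) = (ψ g : k) * F p

section DetPAux

variable {k V A : Type} [Field k] {src tgt : A → V} {α : V → ℕ}

theorem isPolyFun_const (c : k) :
    IsPolyFun (src := src) (tgt := tgt) (α := α) fun _ => c :=
  ⟨MvPolynomial.C c, fun _ => MvPolynomial.eval_C _⟩

theorem IsPolyFun.add {F G : RepSpace k src tgt α → k} (hF : IsPolyFun F)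
    (hG : IsPolyFun G) : IsPolyFun fun p => F p + G p := by
  obtain ⟨P, hP⟩ := hF; obtain ⟨Q, hQ⟩ := hG
  exact ⟨P + Q, fun p => by simp [hP p, hQ p]⟩

theorem IsPolyFun.mul {F G : RepSpace k src tgt α → k} (hF : IsPolyFun F)
    (hG : IsPolyFun G) : IsPolyFun fun p => F p * G p := by
  obtain ⟨P, hP⟩ := hF; obtain ⟨Q, hQ⟩ := hG
  exact ⟨P * Q, fun p => by simp [hP p, hQ p]⟩

theorem isPolyFun_sum {ι : Type*} (s : Finset ι) (F : ι → RepSpace k src tgt α → k)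
    (h : ∀ i ∈ s, IsPolyFun (F i)) : IsPolyFun fun p => ∑ i ∈ s, F i p := by
  classical
  induction s using Finset.induction_on with
  | empty => simpa using isPolyFun_const (src := src) (tgt := tgt) (α := α) 0
  | @insert x s hx ih =>
      simp only [Finset.sum_insert hx]
      exact (h x (Finset.mem_insert_self x s)).add
        (ih fun i hi => h i (Finset.mem_insert_of_mem hi))

theorem isPolyFun_prod {ι : Type*} (s : Finset ι) (F : ι → RepSpace k src tgt α → k)
    (h : ∀ i ∈ s, IsPolyFun (F i)) : IsPolyFun fun p => ∏ i ∈ s, F i p := by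
  classical
  induction s using Finset.induction_on with
  | empty => simpa using isPolyFun_const (src := src) (tgt := tgt) (α := α) 1
  | @insert x s hx ih =>
      simp only [Finset.prod_insert hx]
      exact (h x (Finset.mem_insert_self x s)).mul
        (ih fun i hi => h i (Finset.mem_insert_of_mem hi))

theorem isPolyFun_coord (a : A) (i : Fin (α (src a))) (j : Fin (α (tgt a))) :
    IsPolyFun (k := k) (src := src) (tgt := tgt) fun p => p a i j :=
  ⟨MvPolynomial.X ⟨a, (i, j)⟩, fun p => MvPolynomial.eval_X _⟩

theorem isPolyFun_evalPath [Fintype A] {u v : V} (q : QPath src tgt u v) :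
    ∀ (i : Fin (α u)) (j : Fin (α v)),
      IsPolyFun fun p : RepSpace k src tgt α => evalPath p q i j := by
  induction q with
  | nil =>
      intro i j
      simpa [evalPath, Matrix.one_apply] using
        isPolyFun_const (src := src) (tgt := tgt) (α := α) (if i = j then (1 : k) else 0)
  | cons q a h ih =>
      intro i j
      simp only [evalPath, Matrix.mul_apply, Matrix.submatrix_apply, id]
      exact isPolyFun_sum _ _ fun l _ => (ih i l).mul (isPolyFun_coord a _ j)

theorem isPolyFun_mat [Fintype A] (φ : AddMap k src tgt) (r : φ.rows α) (c : φ.cols α) :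
    IsPolyFun fun p => φ.mat α p r c := by
  simp only [AddMap.mat, Finsupp.sum, Matrix.sum_apply, Matrix.smul_apply, smul_eq_mul]
  exact isPolyFun_sum _ _ fun q _ =>
    (isPolyFun_const _).mul (isPolyFun_evalPath q r.2 c.2)

theorem evalPath_glAct (g : ∀ v, GL (Fin (α v)) k) (p : RepSpace k src tgt α)
    {u v : V} (q : QPath src tgt u v) :
    evalPath (glAct g p) q =
      (↑(g u)⁻¹ : Matrix (Fin (α u)) (Fin (α u)) k) * evalPath p q * (↑(g v) : Matrix (Fin (α v)) (Fin (α v)) k) := by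
  induction q with
  | nil =>
      simp only [evalPath]
      rw [Matrix.mul_one, ← Units.val_mul, inv_mul_cancel, Units.val_one]
  | cons q a h ih =>
      subst h
      simp only [evalPath, ih, glAct, Fin.cast_refl, Matrix.submatrix_id_id]
      haveI := (g (src a)).invertible
      simp [Matrix.mul_assoc, Units.mul_inv_cancel_left, Matrix.mul_inv_cancel_left_of_invertible]

theorem blockDiagonal'_mul_apply {ι : Type} [Fintype ι] [DecidableEq ι]
    {m : ι → Type} [∀ i, Fintype (m i)] {C : Type} [Fintype C]
    (d : ∀ i, Matrix (m i) (m i) k) (M : Matrix (Σ i, m i) C k)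
    (i : ι) (x : m i) (c : C) :
    (Matrix.blockDiagonal' d * M) ⟨i, x⟩ c = ∑ x', d i x x' * M ⟨i, x'⟩ c := by
  rw [Matrix.mul_apply, ← Finset.univ_sigma_univ, Finset.sum_sigma]
  rw [Finset.sum_eq_single i]
  · simp
  · intro i' _ hne
    exact Finset.sum_eq_zero fun x' _ => by
      rw [Matrix.blockDiagonal'_apply_ne _ _ _ (Ne.symm hne), zero_mul]
  · intro habs; exact absurd (Finset.mem_univ i) habs

theorem mul_blockDiagonal'_apply {ι : Type} [Fintype ι] [DecidableEq ι]
    {m : ι → Type} [∀ i, Fintype (m i)] {C : Type} [Fintype C]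
    (d : ∀ i, Matrix (m i) (m i) k) (M : Matrix C (Σ i, m i) k)
    (j : ι) (y : m j) (c : C) :
    (M * Matrix.blockDiagonal' d) c ⟨j, y⟩ = ∑ y', M c ⟨j, y'⟩ * d j y' y := by
  rw [Matrix.mul_apply, ← Finset.univ_sigma_univ, Finset.sum_sigma]
  rw [Finset.sum_eq_single j]
  · simp
  · intro j' _ hne
    exact Finset.sum_eq_zero fun y' _ => by
      rw [Matrix.blockDiagonal'_apply_ne _ _ _ hne, mul_zero]
  · intro habs; exact absurd (Finset.mem_univ j) habs

theorem mat_glAct [Fintype A] (φ : AddMap k src tgt) (g : ∀ v, GL (Fin (α v)) k)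
    (p : RepSpace k src tgt α) :
    φ.mat α (glAct g p) =
      Matrix.blockDiagonal' (fun i => (↑(g (φ.vi i))⁻¹ : Matrix (Fin (α (φ.vi i))) (Fin (α (φ.vi i))) k)) * φ.mat α p *
        Matrix.blockDiagonal' (fun j => (↑(g (φ.vj j)) : Matrix (Fin (α (φ.vj j))) (Fin (α (φ.vj j))) k)) := by
  funext r c
  obtain ⟨i, x⟩ := r; obtain ⟨j, y⟩ := c
  have key : ((φ.entry i j).sum fun q coef => coef • evalPath (glAct g p) q)
      = (↑(g (φ.vi i))⁻¹ : Matrix (Fin (α (φ.vi i))) (Fin (α (φ.vi i))) k) *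
          ((φ.entry i j).sum fun q coef => coef • evalPath p q) *
          (↑(g (φ.vj j)) : Matrix (Fin (α (φ.vj j))) (Fin (α (φ.vj j))) k) := by
    rw [Finsupp.sum, Finsupp.sum, Matrix.mul_sum, Matrix.sum_mul]
    refine Finset.sum_congr rfl fun q _ => ?_
    rw [evalPath_glAct g p q]
    simp [Matrix.mul_smul, Matrix.smul_mul, Matrix.mul_assoc]
  show ((φ.entry i j).sum fun q coef => coef • evalPath (glAct g p) q) x y = _
  rw [key]
  rw [Matrix.mul_apply, mul_blockDiagonal'_apply]
  refine Finset.sum_congr rfl fun y' _ => ?_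
  rw [Matrix.mul_apply, blockDiagonal'_mul_apply]
  rfl

end DetPAux

/-- For a map `φ` in `add(Q)` with `Σᵥ a(v)α(v) = Σᵥ b(v)α(v)` (witnessed by the
bijection `e` between column and row indices), the function `P_{φ,α}(p) = det R_p(φ)` is a
polynomial function on `R(Q,α)` and a semi-invariant for the base-change action of `GL(α)`:
there is a character `ψ` of `GL(α)` with `P_{φ,α}(g·p) = ψ(g)·P_{φ,α}(p)` for all `g`, `p`. -/
theorem detP_isPolyFun_and_isSemiInv [Fintype V] [Fintype A] [IsAlgClosed k]
    (src tgt : A → V) (α : V → ℕ) (φ : AddMap k src tgt) (e : φ.cols α ≃ φ.rows α) :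
    IsPolyFun (detP φ α e) ∧ IsSemiInv (detP φ α e) := by
  constructor
  · -- polynomiality
    have : ∀ p, detP φ α e p =
        ∑ σ : Equiv.Perm (φ.cols α),
          ((Equiv.Perm.sign σ : ℤ) : k) * ∏ c, φ.mat α p (e (σ c)) c := by
      intro p
      rw [detP, Matrix.det_apply']
      rfl
    simp only [funext this]
    exact isPolyFun_sum _ _ fun σ _ =>
      (isPolyFun_const _).mul (isPolyFun_prod _ _ fun c _ => isPolyFun_mat φ _ c)
  · -- semi-invariance
    set Bρ : (∀ v, GL (Fin (α v)) k) →* Matrix (φ.rows α) (φ.rows α) k :=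
      (Matrix.blockDiagonal'RingHom (fun i : φ.ι => Fin (α (φ.vi i))) k).toMonoidHom.comp
        (Pi.monoidHom fun i => (Units.coeHom _).comp
          (Pi.evalMonoidHom (fun v => GL (Fin (α v)) k) (φ.vi i))) with hBρ
    set Bε : (∀ v, GL (Fin (α v)) k) →* Matrix (φ.cols α) (φ.cols α) k :=
      (Matrix.blockDiagonal'RingHom (fun j : φ.κ => Fin (α (φ.vj j))) k).toMonoidHom.comp
        (Pi.monoidHom fun j => (Units.coeHom _).comp
          (Pi.evalMonoidHom (fun v => GL (Fin (α v)) k) (φ.vj j))) with hBε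
    refine ⟨((Units.map (Matrix.detMonoidHom)).comp Bρ.toHomUnits)⁻¹ *
        ((Units.map (Matrix.detMonoidHom)).comp Bε.toHomUnits), fun g p => ?_⟩
    have hDinv : Matrix.blockDiagonal' (fun i => (↑(g (φ.vi i))⁻¹ : Matrix (Fin (α (φ.vi i))) (Fin (α (φ.vi i))) k)) = Bρ g⁻¹ := rfl
    have hE : Matrix.blockDiagonal' (fun j => (↑(g (φ.vj j)) : Matrix (Fin (α (φ.vj j))) (Fin (α (φ.vj j))) k)) = Bε g := rfl
    rw [detP, mat_glAct φ g p, hDinv, hE]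
    have h1 : (Bρ g⁻¹ * φ.mat α p * Bε g).submatrix ⇑e id
        = (Bρ g⁻¹).submatrix ⇑e ⇑e * ((φ.mat α p).submatrix ⇑e id * Bε g) := by
      rw [Matrix.mul_assoc,
        ← Matrix.submatrix_mul_equiv (Bρ g⁻¹) (φ.mat α p * Bε g) ⇑e e id]
      congr 1
    rw [h1, Matrix.det_mul, Matrix.det_mul, Matrix.det_submatrix_equiv_self]
    have hd1 : (Bρ g⁻¹).det
        = ((((Units.map (Matrix.detMonoidHom)).comp Bρ.toHomUnits) g)⁻¹ : kˣ) := by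
      rw [← map_inv]
      rfl
    have hd2 : (Bε g).det
        = ((((Units.map (Matrix.detMonoidHom)).comp Bε.toHomUnits) g) : kˣ) := rfl
    rw [hd1, hd2, detP]
    simp only [MonoidHom.mul_apply, MonoidHom.inv_apply, Units.val_mul]
    ring
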